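/- Let X₁, …, X_n be independent and identically distributed real random variables with E[X₁] = 0, variance σ² = Var(X₁) > 0, and finite third absolute moment γ = E|X₁|³. Let φ(t) be the characteristic function of X₁. Then for every ε with 0 < ε ≤ σ²/(4γ), ∫_{−ε}^{ε} | φ(t)ⁿ − exp(−t² σ² n /2) | dt ≤ 144 γ / (σ⁴ n). -/

import Mathlib

open MeasureTheory ProbabilityTheory


lemma my_step {f g : ℝ → ℂ} {C : ℝ} {k : ℕ}
    (hf : ∀ s, HasDerivAt f (g s) s) (hg : Continuous g)
    (hbound : ∀ s, ‖g s‖ ≤ C * |s| ^ k) (h0 : f 0 = 0) (hC : 0 ≤ C) (y : ℝ) :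
    ‖f y‖ ≤ C * |y| ^ (k + 1) := by
  have hfi : IntervalIntegrable g MeasureTheory.volume 0 y := hg.intervalIntegrable _ _
  have h1 : ∫ s in (0:ℝ)..y, g s = f y - f 0 :=
    intervalIntegral.integral_eq_sub_of_hasDerivAt (fun s _ => hf s) hfi
  have h2 : ‖∫ s in (0:ℝ)..y, g s‖ ≤ C * |y| ^ k * |y - 0| := by
    apply intervalIntegral.norm_integral_le_of_norm_le_const
    intro s hs
    have hs' : |s| ≤ |y| := by
      rcases le_total (0:ℝ) y with h | h
      · rw [Set.uIoc_of_le h] at hs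
        rw [_root_.abs_of_pos hs.1, _root_.abs_of_nonneg h]; exact hs.2
      · rw [Set.uIoc_of_ge h] at hs
        rw [_root_.abs_of_nonpos hs.2, _root_.abs_of_nonpos h]; linarith [hs.1]
    calc ‖g s‖ ≤ C * |s| ^ k := hbound s
      _ ≤ C * |y| ^ k :=
          mul_le_mul_of_nonneg_left (pow_le_pow_left₀ (abs_nonneg _) hs' k) hC
  rw [h1, h0, sub_zero] at h2
  calc ‖f y‖ ≤ C * |y| ^ k * |y - 0| := h2
    _ = C * |y| ^ (k+1) := by rw [sub_zero, pow_succ]; ring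

lemma exp_I_deriv (s : ℝ) :
    HasDerivAt (fun x : ℝ => Complex.exp (Complex.I * x)) (Complex.I * Complex.exp (Complex.I * s)) s := by
  have h : HasDerivAt (fun z : ℂ => Complex.exp (Complex.I * z))
      (Complex.exp (Complex.I * s) * Complex.I) (s : ℂ) := by
    exact ((Complex.hasDerivAt_exp (Complex.I * s)).comp (s : ℂ)
      ((hasDerivAt_id (s : ℂ)).const_mul Complex.I)).congr_deriv (by simp)
  simpa [mul_comm] using h.comp_ofReal

lemma taylor1 (y : ℝ) : ‖Complex.exp (Complex.I * y) - 1‖ ≤ |y| := by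
  have := my_step (f := fun x : ℝ => Complex.exp (Complex.I * x) - 1)
      (g := fun s : ℝ => Complex.I * Complex.exp (Complex.I * s)) (C := 1) (k := 0)
      (fun s => (exp_I_deriv s).sub_const 1)
      (by continuity)
      (fun s => by simp [Complex.norm_exp])
      (by simp) zero_le_one y
  simpa using this

lemma taylor2 (y : ℝ) : ‖Complex.exp (Complex.I * y) - 1 - Complex.I * y‖ ≤ |y| ^ 2 := by
  have := my_step (f := fun x : ℝ => Complex.exp (Complex.I * x) - 1 - Complex.I * x)
      (g := fun s : ℝ => Complex.I * (Complex.exp (Complex.I * s) - 1)) (C := 1) (k := 1)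
      (fun s => by
        have h1 := (exp_I_deriv s).sub_const 1
        have h2 : HasDerivAt (fun x : ℝ => Complex.I * (x : ℂ)) Complex.I s := by
          simpa using (Complex.ofRealCLM.hasDerivAt (x := s)).const_mul Complex.I
        exact (h1.sub h2).congr_deriv (by ring))
      (by continuity)
      (fun s => by simpa [map_mul] using taylor1 s)
      (by simp) zero_le_one y
  simpa using this

lemma taylor3 (y : ℝ) :
    ‖Complex.exp (Complex.I * y) - 1 - Complex.I * y + ((y ^ 2 / 2 : ℝ) : ℂ)‖ ≤ |y| ^ 3 := by
  have := my_step
      (f := fun x : ℝ => Complex.exp (Complex.I * x) - 1 - Complex.I * x + ((x ^ 2 / 2 : ℝ) : ℂ))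
      (g := fun s : ℝ => Complex.I * (Complex.exp (Complex.I * s) - 1 - Complex.I * s)) (C := 1) (k := 2)
      (fun s => by
        have h1 := (exp_I_deriv s).sub_const 1
        have h2 : HasDerivAt (fun x : ℝ => Complex.I * (x : ℂ)) Complex.I s := by
          simpa using (Complex.ofRealCLM.hasDerivAt (x := s)).const_mul Complex.I
        have h3 : HasDerivAt (fun x : ℝ => ((x ^ 2 / 2 : ℝ) : ℂ)) ((s : ℂ)) s := by
          have := ((hasDerivAt_pow 2 s).div_const 2).ofReal_comp
          simpa using this
        have := (h1.sub h2).add h3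
        refine this.congr_deriv ?_
        have : Complex.I * Complex.I = -1 := Complex.I_mul_I
        linear_combination (s : ℂ) * this)
      (by continuity)
      (fun s => by simpa [map_mul] using taylor2 s)
      (by simp) zero_le_one y
  simpa using this


lemma my_pow_sub_pow (a b : ℂ) (M : ℝ) (hM : 0 ≤ M) (ha : ‖a‖ ≤ M) (hb : ‖b‖ ≤ M) :
    ∀ n : ℕ, ‖a ^ (n + 1) - b ^ (n + 1)‖ ≤ (n + 1) * M ^ n * ‖a - b‖ := by
  intro n
  induction n with
  | zero => simp
  | succ k ih =>
      have key : a ^ (k + 2) - b ^ (k + 2) = a ^ (k + 1) * (a - b) + (a ^ (k + 1) - b ^ (k + 1)) * b := by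
        ring
      rw [key]
      calc ‖a ^ (k + 1) * (a - b) + (a ^ (k + 1) - b ^ (k + 1)) * b‖
          ≤ ‖a ^ (k + 1) * (a - b)‖ + ‖(a ^ (k + 1) - b ^ (k + 1)) * b‖ := norm_add_le _ _
        _ = ‖a‖ ^ (k + 1) * ‖a - b‖ + ‖a ^ (k + 1) - b ^ (k + 1)‖ * ‖b‖ := by
            rw [norm_mul, norm_mul, norm_pow]
        _ ≤ M ^ (k + 1) * ‖a - b‖ + ((k + 1) * M ^ k * ‖a - b‖) * M := by
            gcongr
        _ = (↑(k + 1) + 1) * M ^ (k + 1) * ‖a - b‖ := by push_cast; ring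

lemma my_exp_neg_taylor {x : ℝ} (hx : 0 ≤ x) : |Real.exp (-x) - (1 - x)| ≤ x ^ 2 / 2 := by
  have h1 : 1 - x ≤ Real.exp (-x) := by linarith [Real.add_one_le_exp (-x)]
  have h2 : Real.exp (-x) ≤ 1 - x + x ^ 2 / 2 := by
    have hq : 1 + x + x ^ 2 / 2 ≤ Real.exp x := Real.quadratic_le_exp_of_nonneg hx
    have hpos : (0:ℝ) < 1 + x + x ^ 2 / 2 := by positivity
    rw [Real.exp_neg]
    rw [inv_le_iff_one_le_mul₀ (Real.exp_pos x)]
    calc (1:ℝ) ≤ (1 - x + x ^ 2 / 2) * (1 + x + x ^ 2 / 2) := by nlinarith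
      _ ≤ (1 - x + x ^ 2 / 2) * Real.exp x :=
          mul_le_mul_of_nonneg_left hq (by nlinarith [sq_nonneg (x - 1)])
  rw [abs_le]; constructor <;> nlinarith

lemma my_gauss_int {a : ℝ} (ha : 0 < a) {ε : ℝ} (hε : 0 ≤ ε) :
    ∫ t in (-ε)..ε, |t| ^ 3 * Real.exp (-(a * t ^ 2)) ≤ 1 / a ^ 2 := by
  set h : ℝ → ℝ := fun t => |t| ^ 3 * Real.exp (-(a * t ^ 2)) with hh
  have hcont : Continuous h := by
    apply Continuous.mul
    · exact (continuous_abs.pow 3)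
    · exact Real.continuous_exp.comp (by continuity)
  have hint : ∀ u v : ℝ, IntervalIntegrable h volume u v := fun u v => hcont.intervalIntegrable u v
  -- positive half via antiderivative
  have hF : ∀ t : ℝ, HasDerivAt (fun t : ℝ => -(t ^ 2 / (2 * a) + 1 / (2 * a ^ 2)) * Real.exp (-(a * t ^ 2)))
      (t ^ 3 * Real.exp (-(a * t ^ 2))) t := by
    intro t
    have hu : HasDerivAt (fun t : ℝ => -(t ^ 2 / (2 * a) + 1 / (2 * a ^ 2))) (-(t / a)) t := by
      have := ((hasDerivAt_pow 2 t).div_const (2 * a)).add_const (1 / (2 * a ^ 2))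
      have := this.neg
      refine this.congr_deriv ?_
      norm_num; field_simp
    have hv : HasDerivAt (fun t : ℝ => Real.exp (-(a * t ^ 2))) (-(a * (2 * t)) * Real.exp (-(a * t ^ 2))) t := by
      have hinner : HasDerivAt (fun t : ℝ => -(a * t ^ 2)) (-(a * (2 * t))) t := by
        have := ((hasDerivAt_pow 2 t).const_mul a).neg
        exact this.congr_deriv (by simp)
      refine ((Real.hasDerivAt_exp (-(a * t ^ 2))).comp t hinner).congr_deriv ?_
      ring
    have := hu.mul hv
    refine this.congr_deriv ?_
    field_simp
    ring
  have hpos : ∫ t in (0:ℝ)..ε, h t ≤ 1 / (2 * a ^ 2) := by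
    have heq : ∫ t in (0:ℝ)..ε, h t = ∫ t in (0:ℝ)..ε, t ^ 3 * Real.exp (-(a * t ^ 2)) := by
      apply intervalIntegral.integral_congr
      intro t ht
      rw [Set.uIcc_of_le hε] at ht
      simp [hh, _root_.abs_of_nonneg ht.1]
    rw [heq, intervalIntegral.integral_eq_sub_of_hasDerivAt (fun t _ => hF t)
      (Continuous.intervalIntegrable (by continuity) 0 ε)]
    have h1 : (0:ℝ) ≤ (ε ^ 2 / (2 * a) + 1 / (2 * a ^ 2)) * Real.exp (-(a * ε ^ 2)) := by positivity
    simp only [neg_mul]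
    have : -((ε ^ 2 / (2 * a) + 1 / (2 * a ^ 2)) * Real.exp (-(a * ε ^ 2))) -
        -((0 ^ 2 / (2 * a) + 1 / (2 * a ^ 2)) * Real.exp (-(a * 0 ^ 2))) ≤ 1 / (2 * a ^ 2) := by
      simp; positivity
    convert this using 2 <;> ring
  have hneg : ∫ t in (-ε)..(0:ℝ), h t = ∫ t in (0:ℝ)..ε, h t := by
    have := intervalIntegral.integral_comp_neg (a := (0:ℝ)) (b := ε) (f := h)
    simp only [neg_zero] at this
    rw [← this]
    apply intervalIntegral.integral_congr
    intro t _
    simp [hh]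
  have hsplit : ∫ t in (-ε)..ε, h t = (∫ t in (-ε)..(0:ℝ), h t) + ∫ t in (0:ℝ)..ε, h t :=
    (intervalIntegral.integral_add_adjacent_intervals (hint _ _) (hint _ _)).symm
  rw [hsplit, hneg]
  have : 1 / (2 * a ^ 2) + 1 / (2 * a ^ 2) = 1 / a ^ 2 := by field_simp; ring
  linarith


lemma my_integral_ofReal {Ω : Type*} [MeasurableSpace Ω] (μ : Measure Ω) (f : Ω → ℝ) :
    ∫ ω, ((f ω : ℝ) : ℂ) ∂μ = ((∫ ω, f ω ∂μ : ℝ) : ℂ) :=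
  integral_ofReal (𝕜 := ℂ)

lemma char_taylor {Ω : Type*} [MeasurableSpace Ω] (μ : Measure Ω) [IsProbabilityMeasure μ]
    (X0 : Ω → ℝ) (hm : Measurable X0) (hmean : ∫ ω, X0 ω ∂μ = 0)
    (hX1 : Integrable X0 μ) (hX2 : Integrable (fun ω => X0 ω ^ 2) μ)
    (hX3 : Integrable (fun ω => |X0 ω| ^ 3) μ) (t : ℝ) :
    ‖(∫ ω, Complex.exp (Complex.I * (t * X0 ω)) ∂μ) - 1 +
        ((t ^ 2 * (∫ ω, X0 ω ^ 2 ∂μ) / 2 : ℝ) : ℂ)‖ ≤ |t| ^ 3 * ∫ ω, |X0 ω| ^ 3 ∂μ := by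
  have hBeq : (fun ω => Complex.I * ((t : ℂ) * (X0 ω : ℂ))) =
      fun ω => (Complex.I * t) * ((X0 ω : ℝ) : ℂ) := by funext ω; ring
  have hCeq : (fun ω => (((t * X0 ω) ^ 2 / 2 : ℝ) : ℂ)) =
      fun ω => ((t ^ 2 / 2 * X0 ω ^ 2 : ℝ) : ℂ) := by funext ω; push_cast; ring
  have hA : Integrable (fun ω => Complex.exp (Complex.I * (t * X0 ω))) μ := by
    apply Integrable.mono' (integrable_const (1 : ℝ))
    · exact (Complex.measurable_exp.comp
        (((Complex.measurable_ofReal.comp hm).const_mul (t : ℂ)).const_mul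
          Complex.I)).aestronglyMeasurable
    · filter_upwards with ω
      rw [Complex.norm_exp]
      simp
  have hB : Integrable (fun ω => Complex.I * ((t : ℂ) * (X0 ω : ℂ))) μ := by
    rw [hBeq]
    exact (hX1.ofReal).const_mul _
  have hC : Integrable (fun ω => (((t * X0 ω) ^ 2 / 2 : ℝ) : ℂ)) μ := by
    rw [hCeq]
    exact ((hX2.const_mul (t ^ 2 / 2)).ofReal)
  have hintB : ∫ ω, Complex.I * ((t : ℂ) * (X0 ω : ℂ)) ∂μ = 0 := by
    rw [hBeq, integral_const_mul, my_integral_ofReal, hmean]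
    simp
  have hintC : ∫ ω, (((t * X0 ω) ^ 2 / 2 : ℝ) : ℂ) ∂μ =
      ((t ^ 2 * (∫ ω, X0 ω ^ 2 ∂μ) / 2 : ℝ) : ℂ) := by
    rw [hCeq, my_integral_ofReal, integral_const_mul]
    norm_num
    ring_nf
  have he : Integrable (fun ω => Complex.exp (Complex.I * (t * X0 ω)) - 1 -
      Complex.I * ((t : ℂ) * (X0 ω : ℂ)) + (((t * X0 ω) ^ 2 / 2 : ℝ) : ℂ)) μ :=
    ((hA.sub (integrable_const 1)).sub hB).add hC
  have hsum : ∫ ω, (Complex.exp (Complex.I * (t * X0 ω)) - 1 -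
      Complex.I * ((t : ℂ) * (X0 ω : ℂ)) + (((t * X0 ω) ^ 2 / 2 : ℝ) : ℂ)) ∂μ =
      (∫ ω, Complex.exp (Complex.I * (t * X0 ω)) ∂μ) - 1 +
        ((t ^ 2 * (∫ ω, X0 ω ^ 2 ∂μ) / 2 : ℝ) : ℂ) := by
    have h1 := integral_add ((hA.sub (integrable_const 1)).sub hB) hC
    simp only [Pi.sub_apply] at h1
    have h2 := integral_sub (hA.sub (integrable_const 1)) hB
    simp only [Pi.sub_apply] at h2
    have h3 := integral_sub hA (integrable_const 1)
    rw [h1, h2, h3, integral_const, hintB, hintC]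
    simp
  rw [← hsum]
  calc ‖∫ ω, (Complex.exp (Complex.I * (t * X0 ω)) - 1 -
      Complex.I * ((t : ℂ) * (X0 ω : ℂ)) + (((t * X0 ω) ^ 2 / 2 : ℝ) : ℂ)) ∂μ‖
      ≤ ∫ ω, ‖Complex.exp (Complex.I * (t * X0 ω)) - 1 -
        Complex.I * ((t : ℂ) * (X0 ω : ℂ)) + (((t * X0 ω) ^ 2 / 2 : ℝ) : ℂ)‖ ∂μ :=
        norm_integral_le_integral_norm _
    _ ≤ ∫ ω, |t| ^ 3 * |X0 ω| ^ 3 ∂μ := by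
        apply integral_mono he.norm (hX3.const_mul (|t| ^ 3))
        intro ω
        have := taylor3 (t * X0 ω)
        have heq : ((t * X0 ω : ℝ) : ℂ) = (t : ℂ) * (X0 ω : ℂ) := by push_cast; ring
        rw [heq] at this
        calc ‖Complex.exp (Complex.I * (t * X0 ω)) - 1 -
            Complex.I * ((t : ℂ) * (X0 ω : ℂ)) + (((t * X0 ω) ^ 2 / 2 : ℝ) : ℂ)‖
            ≤ |t * X0 ω| ^ 3 := this
          _ = |t| ^ 3 * |X0 ω| ^ 3 := by rw [abs_mul, mul_pow]
    _ = |t| ^ 3 * ∫ ω, |X0 ω| ^ 3 ∂μ := integral_const_mul _ _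


set_option maxHeartbeats 1600000 in
theorem char_fun_central_integral_bound
    {Ω : Type*} [MeasurableSpace Ω] {μ : Measure Ω} [IsProbabilityMeasure μ]
    (n : ℕ) (hn : 0 < n) (X : Fin n → Ω → ℝ) (hmeas : ∀ i, Measurable (X i))
    (hindep : iIndepFun X μ)
    (hident : ∀ i, IdentDistrib (X i) (X ⟨0, hn⟩) μ μ)
    (hmean : ∫ ω, X ⟨0, hn⟩ ω ∂μ = 0)
    (σ γ : ℝ) (hσpos : 0 < σ) (hσ : σ ^ 2 = variance (X ⟨0, hn⟩) μ)
    (hγint : Integrable (fun ω => |X ⟨0, hn⟩ ω| ^ 3) μ)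
    (hγ : γ = ∫ ω, |X ⟨0, hn⟩ ω| ^ 3 ∂μ)
    (φ : ℝ → ℂ)
    (hφ : ∀ t : ℝ, φ t = ∫ ω, Complex.exp (Complex.I * (t * X ⟨0, hn⟩ ω)) ∂μ)
    (ε : ℝ) (hε : 0 < ε) (hεle : ε ≤ σ ^ 2 / (4 * γ)) :
    (∫ t in (-ε)..ε,
        ‖φ t ^ n - Real.exp (-(t ^ 2 * σ ^ 2 * n) / 2)‖) ≤
      144 * γ / (σ ^ 4 * n) := by
  set X0 : Ω → ℝ := X ⟨0, hn⟩ with hX0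
  have hm : Measurable X0 := hmeas _
  have hX2 : Integrable (fun ω => X0 ω ^ 2) μ := by
    apply Integrable.mono' ((integrable_const (1 : ℝ)).add hγint)
      ((hm.pow_const 2).aestronglyMeasurable)
    filter_upwards with ω
    simp only [Pi.add_apply]
    rw [Real.norm_eq_abs, abs_of_nonneg (sq_nonneg _)]
    have h1 : (0:ℝ) ≤ |X0 ω| := abs_nonneg _
    have h2 : |X0 ω| ^ 2 = X0 ω ^ 2 := sq_abs _
    nlinarith [mul_nonneg (mul_nonneg h1 h1) h1, sq_nonneg (|X0 ω| - 1),
      mul_nonneg (sq_nonneg (|X0 ω| - 1)) h1]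
  have hX1 : Integrable X0 μ := by
    apply Integrable.mono' ((integrable_const (1 : ℝ)).add hγint) hm.aestronglyMeasurable
    filter_upwards with ω
    simp only [Pi.add_apply]
    rw [Real.norm_eq_abs]
    have h1 : (0:ℝ) ≤ |X0 ω| := abs_nonneg _
    nlinarith [mul_nonneg (sq_nonneg (|X0 ω| - 1)) h1, sq_nonneg (2 * |X0 ω| - 1)]
  have hmem2 : MemLp X0 2 μ := (memLp_two_iff_integrable_sq hm.aestronglyMeasurable).2 hX2
  have hvar : σ ^ 2 = ∫ ω, X0 ω ^ 2 ∂μ := by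
    rw [hσ, variance_eq_sub hmem2]
    simp only [Pi.pow_apply]
    rw [hmean]
    ring
  have hγ3 : σ ^ 3 ≤ γ := by
    have hpt : ∀ ω, σ * X0 ω ^ 2 ≤ (2 * |X0 ω| ^ 3 + σ ^ 3) / 3 := by
      intro ω
      have h2 : |X0 ω| ^ 2 = X0 ω ^ 2 := sq_abs _
      nlinarith [mul_nonneg (sq_nonneg (|X0 ω| - σ))
        (by positivity : (0:ℝ) ≤ 2 * |X0 ω| + σ)]
    have hint := integral_mono (hX2.const_mul σ)
      (((hγint.const_mul 2).add (integrable_const (σ ^ 3))).div_const 3) hpt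
    rw [integral_const_mul] at hint
    simp only [Pi.add_apply] at hint
    rw [integral_div, integral_add (hγint.const_mul 2) (integrable_const _),
      integral_const_mul, integral_const] at hint
    simp only [measure_univ, probReal_univ, ENNReal.toReal_one, smul_eq_mul, one_mul] at hint
    rw [← hvar, ← hγ] at hint
    nlinarith [hint]
  have hγpos : 0 < γ := lt_of_lt_of_le (by positivity) hγ3
  have hσ6 : σ ^ 6 ≤ γ ^ 2 := by nlinarith [pow_pos hσpos 3]
  have hεγ : ε * (4 * γ) ≤ σ ^ 2 := by
    rw [← le_div_iff₀ (by positivity)]; exact hεle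
  obtain ⟨m, rfl⟩ : ∃ m, n = m + 1 := ⟨n - 1, (Nat.succ_pred_eq_of_pos hn).symm⟩
  set a : ℝ := ((m : ℝ) + 1) * σ ^ 2 / 8 with ha_def
  have hapos : 0 < a := by positivity
  have key : ∀ t : ℝ, |t| ≤ ε →
      ‖φ t ^ (m + 1) -
          ((Real.exp (-(t ^ 2 * σ ^ 2 * ((m + 1 : ℕ) : ℝ)) / 2) : ℝ) : ℂ)‖ ≤
        2 * ((m : ℝ) + 1) * γ * (|t| ^ 3 * Real.exp (-(a * t ^ 2))) := by
    intro t ht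
    have htpos : (0:ℝ) ≤ |t| := abs_nonneg t
    have ht2 : t ^ 2 ≤ ε ^ 2 := by nlinarith [sq_abs t]
    have hb0 : (0:ℝ) ≤ σ ^ 2 * t ^ 2 := by positivity
    have htb : σ ^ 2 * t ^ 2 ≤ 1 / 16 := by
      have h1 : 4 * ε * σ ^ 3 ≤ σ ^ 2 := by
        nlinarith [mul_nonneg hε.le (sub_nonneg.mpr hγ3)]
      have h2 : σ * ε ≤ 1 / 4 := by nlinarith [mul_pos hσpos hσpos]
      nlinarith [mul_nonneg hσpos.le hε.le, mul_le_mul_of_nonneg_left ht2 (sq_nonneg σ)]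
    have hγt : γ * |t| ≤ σ ^ 2 / 4 := by
      nlinarith [mul_nonneg hγpos.le (sub_nonneg.mpr ht)]
    have h4 : 4 * σ ^ 4 * |t| ≤ γ := by
      have e1 : σ ^ 4 * (ε * (4 * γ)) ≤ σ ^ 4 * σ ^ 2 :=
        mul_le_mul_of_nonneg_left hεγ (by positivity)
      have e2 : 4 * σ ^ 4 * ε * γ ≤ γ ^ 2 := by nlinarith
      have e3 : 4 * σ ^ 4 * ε ≤ γ := by nlinarith [hγpos]
      nlinarith [mul_nonneg (by positivity : (0:ℝ) ≤ 4 * σ ^ 4) (sub_nonneg.mpr ht)]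
    have habs3 : |t| ^ 3 = |t| * t ^ 2 := by rw [← sq_abs]; ring
    have habs4 : |t| ^ 4 = t ^ 4 := by rw [← abs_pow]; exact abs_of_nonneg (by positivity)
    -- Taylor bound on φ
    have hT := char_taylor μ X0 hm hmean hX1 hX2 hγint t
    rw [← hφ t, ← hvar, ← hγ] at hT
    have hφ1 : ‖φ t - ((1 - σ ^ 2 * t ^ 2 / 2 : ℝ) : ℂ)‖ ≤ γ * |t| ^ 3 := by
      have heq : φ t - ((1 - σ ^ 2 * t ^ 2 / 2 : ℝ) : ℂ) =
          φ t - 1 + ((t ^ 2 * σ ^ 2 / 2 : ℝ) : ℂ) := by push_cast; ring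
      rw [heq]
      calc ‖φ t - 1 + ((t ^ 2 * σ ^ 2 / 2 : ℝ) : ℂ)‖ ≤ |t| ^ 3 * γ := hT
        _ = γ * |t| ^ 3 := mul_comm _ _
    have hone : (0:ℝ) ≤ 1 - σ ^ 2 * t ^ 2 / 2 := by nlinarith
    have hnorm1 : ‖((1 - σ ^ 2 * t ^ 2 / 2 : ℝ) : ℂ)‖ = 1 - σ ^ 2 * t ^ 2 / 2 := by
      rw [Complex.norm_real, Real.norm_eq_abs, abs_of_nonneg hone]
    have hγt3 : γ * |t| ^ 3 ≤ σ ^ 2 * t ^ 2 / 4 := by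
      rw [habs3]
      nlinarith [mul_le_mul_of_nonneg_right hγt (sq_nonneg t)]
    have hφabs : ‖φ t‖ ≤ Real.exp (-(σ ^ 2 * t ^ 2 / 4)) := by
      have h5 : ‖φ t‖ ≤ (1 - σ ^ 2 * t ^ 2 / 2) + γ * |t| ^ 3 := by
        calc ‖φ t‖ = ‖((1 - σ ^ 2 * t ^ 2 / 2 : ℝ) : ℂ) +
              (φ t - ((1 - σ ^ 2 * t ^ 2 / 2 : ℝ) : ℂ))‖ := by congr 1; ring
          _ ≤ ‖((1 - σ ^ 2 * t ^ 2 / 2 : ℝ) : ℂ)‖ +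
              ‖φ t - ((1 - σ ^ 2 * t ^ 2 / 2 : ℝ) : ℂ)‖ := norm_add_le _ _
          _ ≤ (1 - σ ^ 2 * t ^ 2 / 2) + γ * |t| ^ 3 := by rw [hnorm1]; linarith [hφ1]
      have h6 : ‖φ t‖ ≤ 1 - σ ^ 2 * t ^ 2 / 4 := by linarith
      have h7 := Real.add_one_le_exp (-(σ ^ 2 * t ^ 2 / 4))
      linarith
    have hc : ‖((Real.exp (-(σ ^ 2 * t ^ 2 / 2)) : ℝ) : ℂ)‖ ≤ Real.exp (-(σ ^ 2 * t ^ 2 / 4)) := by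
      rw [Complex.norm_real, Real.norm_eq_abs, abs_of_pos (Real.exp_pos _)]
      apply Real.exp_le_exp.mpr
      linarith
    have hδ : ‖φ t - ((Real.exp (-(σ ^ 2 * t ^ 2 / 2)) : ℝ) : ℂ)‖ ≤ 33 / 32 * (γ * |t| ^ 3) := by
      have htri : ‖φ t - ((Real.exp (-(σ ^ 2 * t ^ 2 / 2)) : ℝ) : ℂ)‖ ≤
          ‖φ t - ((1 - σ ^ 2 * t ^ 2 / 2 : ℝ) : ℂ)‖ +
          ‖((1 - σ ^ 2 * t ^ 2 / 2 : ℝ) : ℂ) - ((Real.exp (-(σ ^ 2 * t ^ 2 / 2)) : ℝ) : ℂ)‖ := by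
        rw [← sub_add_sub_cancel (φ t) ((1 - σ ^ 2 * t ^ 2 / 2 : ℝ) : ℂ)
          ((Real.exp (-(σ ^ 2 * t ^ 2 / 2)) : ℝ) : ℂ)]
        exact norm_add_le _ _
      have h8 : ‖((1 - σ ^ 2 * t ^ 2 / 2 : ℝ) : ℂ) -
          ((Real.exp (-(σ ^ 2 * t ^ 2 / 2)) : ℝ) : ℂ)‖ ≤ (σ ^ 2 * t ^ 2 / 2) ^ 2 / 2 := by
        rw [← Complex.ofReal_sub, Complex.norm_real, Real.norm_eq_abs]
        have := my_exp_neg_taylor (x := σ ^ 2 * t ^ 2 / 2) (by positivity)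
        rw [abs_sub_comm] at this
        exact this
      have h9 : (σ ^ 2 * t ^ 2 / 2) ^ 2 / 2 ≤ 1 / 32 * (γ * |t| ^ 3) := by
        have h10 := mul_le_mul_of_nonneg_right h4 (pow_nonneg htpos 3)
        have h11 : 4 * σ ^ 4 * |t| * |t| ^ 3 = 4 * σ ^ 4 * t ^ 4 := by
          rw [← habs4]; ring
        rw [h11] at h10
        nlinarith [h10]
      linarith
    have hpow := my_pow_sub_pow (φ t) ((Real.exp (-(σ ^ 2 * t ^ 2 / 2)) : ℝ) : ℂ)
      (Real.exp (-(σ ^ 2 * t ^ 2 / 4))) (Real.exp_nonneg _) hφabs hc m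
    have hcast : ((Real.exp (-(t ^ 2 * σ ^ 2 * ((m + 1 : ℕ) : ℝ)) / 2) : ℝ) : ℂ) =
        ((Real.exp (-(σ ^ 2 * t ^ 2 / 2)) : ℝ) : ℂ) ^ (m + 1) := by
      rw [← Complex.ofReal_pow, ← Real.exp_nat_mul]
      congr 1
      push_cast; ring
    have hE : Real.exp (-(σ ^ 2 * t ^ 2 / 4)) ^ m ≤ 33 / 32 * Real.exp (-(a * t ^ 2)) := by
      rw [← Real.exp_nat_mul]
      have hsplit : (m : ℝ) * (-(σ ^ 2 * t ^ 2 / 4)) =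
          ((1 - (m : ℝ)) * (σ ^ 2 * t ^ 2) / 8) + (-(a * t ^ 2)) := by
        rw [ha_def]; ring
      rw [hsplit, Real.exp_add]
      have hexp1 : Real.exp ((1 - (m : ℝ)) * (σ ^ 2 * t ^ 2) / 8) ≤ 33 / 32 := by
        have harg : (1 - (m : ℝ)) * (σ ^ 2 * t ^ 2) / 8 ≤ 1 / 128 := by
          have hm0 : (0:ℝ) ≤ (m : ℝ) := Nat.cast_nonneg m
          nlinarith [mul_nonneg hm0 hb0]
        calc Real.exp ((1 - (m : ℝ)) * (σ ^ 2 * t ^ 2) / 8) ≤ Real.exp (1 / 128) :=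
            Real.exp_le_exp.mpr harg
          _ ≤ 1 / (1 - 1 / 128) :=
            Real.exp_bound_div_one_sub_of_interval (by norm_num) (by norm_num)
          _ ≤ 33 / 32 := by norm_num
      exact mul_le_mul_of_nonneg_right hexp1 (Real.exp_nonneg _)
    rw [hcast]
    calc ‖φ t ^ (m + 1) - ((Real.exp (-(σ ^ 2 * t ^ 2 / 2)) : ℝ) : ℂ) ^ (m + 1)‖
        ≤ ((m : ℝ) + 1) * Real.exp (-(σ ^ 2 * t ^ 2 / 4)) ^ m *
          ‖φ t - ((Real.exp (-(σ ^ 2 * t ^ 2 / 2)) : ℝ) : ℂ)‖ := by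
          have := hpow; push_cast at this ⊢; linarith [this]
      _ ≤ ((m : ℝ) + 1) * (33 / 32 * Real.exp (-(a * t ^ 2))) * (33 / 32 * (γ * |t| ^ 3)) := by
          apply mul_le_mul _ hδ (norm_nonneg _) (by positivity)
          exact mul_le_mul_of_nonneg_left hE (by positivity)
      _ ≤ 2 * ((m : ℝ) + 1) * γ * (|t| ^ 3 * Real.exp (-(a * t ^ 2))) := by
          have h9 : (0:ℝ) ≤ ((m : ℝ) + 1) * γ * (|t| ^ 3 * Real.exp (-(a * t ^ 2))) := by
            positivity
          nlinarith [h9]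
  -- integrate
  by_cases hfi : IntervalIntegrable (fun t => ‖φ t ^ (m + 1) -
      ((Real.exp (-(t ^ 2 * σ ^ 2 * ((m + 1 : ℕ) : ℝ)) / 2) : ℝ) : ℂ)‖) volume (-ε) ε
  · have hgcont : Continuous (fun t : ℝ =>
        2 * ((m : ℝ) + 1) * γ * (|t| ^ 3 * Real.exp (-(a * t ^ 2)))) := by
      apply Continuous.mul continuous_const
      exact (continuous_abs.pow 3).mul (Real.continuous_exp.comp (by continuity))
    have hgi : IntervalIntegrable (fun t : ℝ =>
        2 * ((m : ℝ) + 1) * γ * (|t| ^ 3 * Real.exp (-(a * t ^ 2)))) volume (-ε) ε :=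
      hgcont.intervalIntegrable (-ε) ε
    have step1 : (∫ t in (-ε)..ε, ‖φ t ^ (m + 1) -
        ((Real.exp (-(t ^ 2 * σ ^ 2 * ((m + 1 : ℕ) : ℝ)) / 2) : ℝ) : ℂ)‖) ≤
        ∫ t in (-ε)..ε, 2 * ((m : ℝ) + 1) * γ * (|t| ^ 3 * Real.exp (-(a * t ^ 2))) := by
      apply intervalIntegral.integral_mono_on (by linarith) hfi hgi
      intro t htmem
      exact key t (abs_le.mpr ⟨by linarith [htmem.1], htmem.2⟩)
    have step2 : (∫ t in (-ε)..ε, 2 * ((m : ℝ) + 1) * γ * (|t| ^ 3 * Real.exp (-(a * t ^ 2)))) =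
        2 * ((m : ℝ) + 1) * γ * ∫ t in (-ε)..ε, |t| ^ 3 * Real.exp (-(a * t ^ 2)) :=
      intervalIntegral.integral_const_mul _ _
    have step3 : 2 * ((m : ℝ) + 1) * γ * (∫ t in (-ε)..ε, |t| ^ 3 * Real.exp (-(a * t ^ 2))) ≤
        2 * ((m : ℝ) + 1) * γ * (1 / a ^ 2) :=
      mul_le_mul_of_nonneg_left (my_gauss_int hapos hε.le) (by positivity)
    have hfin : 2 * ((m : ℝ) + 1) * γ * (1 / a ^ 2) ≤ 144 * γ / (σ ^ 4 * ((m + 1 : ℕ) : ℝ)) := by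
      have hm1 : (0:ℝ) < (m : ℝ) + 1 := by positivity
      have haeq : a ^ 2 = ((m : ℝ) + 1) ^ 2 * σ ^ 4 / 64 := by rw [ha_def]; ring
      rw [haeq]
      have hLHS : 2 * ((m : ℝ) + 1) * γ * (1 / (((m : ℝ) + 1) ^ 2 * σ ^ 4 / 64)) =
          128 * γ / (σ ^ 4 * ((m : ℝ) + 1)) := by
        field_simp
        ring
      rw [hLHS]
      have hcast2 : ((m + 1 : ℕ) : ℝ) = (m : ℝ) + 1 := by push_cast; ring
      rw [hcast2, div_le_div_iff₀ (by positivity) (by positivity)]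
      nlinarith [mul_nonneg (mul_nonneg hγpos.le (by positivity : (0:ℝ) ≤ σ ^ 4)) hm1.le]
    calc (∫ t in (-ε)..ε, ‖φ t ^ (m + 1) -
        ((Real.exp (-(t ^ 2 * σ ^ 2 * ((m + 1 : ℕ) : ℝ)) / 2) : ℝ) : ℂ)‖)
        ≤ ∫ t in (-ε)..ε, 2 * ((m : ℝ) + 1) * γ * (|t| ^ 3 * Real.exp (-(a * t ^ 2))) := step1
      _ = 2 * ((m : ℝ) + 1) * γ * ∫ t in (-ε)..ε, |t| ^ 3 * Real.exp (-(a * t ^ 2)) := step2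
      _ ≤ 2 * ((m : ℝ) + 1) * γ * (1 / a ^ 2) := step3
      _ ≤ 144 * γ / (σ ^ 4 * ((m + 1 : ℕ) : ℝ)) := hfin
  · rw [intervalIntegral.integral_undef hfi]
    positivity
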